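/- In the setting of the geodesic embedding construction — A₀, U real n×k matrices with A₀ᵀA₀ = I_k, UᵀU = I_k, A₀ᵀU = 0, Y real orthogonal k×k with columns y₁,…,y_k, u₁,…,u_k the columns of U, σ₁,…,σ_k ≥ 0, A(t) = A₀ Y cos(Σt) Yᵀ + U sin(Σt) Yᵀ, and B(t) the n×(k+1) matrix whose first block is A₀(y₁y₁ᵀ + Σ_{i=2}^{k} cos(σᵢt) yᵢyᵢᵀ) + Σ_{i=2}^{k} sin(σᵢt) uᵢyᵢᵀ and whose last column is u₁ — for every t one has ‖A(t)ᵀB(t)‖_F² = k; equivalently, all principal angles between the column spaces of A(t) and B(t) are zero, i.e. the column space of A(t) is contained in the column space of B(t). -/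
import Mathlib


open Matrix

private lemma mul_blockcol {m n k : ℕ} (M : Matrix (Fin m) (Fin n) ℝ)
    (P : Matrix (Fin n) (Fin k) ℝ) (u : Fin n → ℝ) :
    M * (Matrix.of fun r (c : Fin (k+1)) => if hc : (c : ℕ) < k then P r ⟨c, hc⟩ else u r)
      = Matrix.of fun r (c : Fin (k+1)) =>
        if hc : (c : ℕ) < k then (M * P) r ⟨c, hc⟩ else (M *ᵥ u) r := by
  ext r c
  by_cases hc : (c : ℕ) < k <;>
    simp [Matrix.mul_apply, Matrix.mulVec, dotProduct, hc]

private lemma blockcol_mul {n k m : ℕ} (P : Matrix (Fin n) (Fin k) ℝ) (u : Fin n → ℝ)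
    (Q : Matrix (Fin k) (Fin m) ℝ) (w : Fin m → ℝ) :
    (Matrix.of fun r (c : Fin (k+1)) => if hc : (c : ℕ) < k then P r ⟨c, hc⟩ else u r)
      * (Matrix.of fun (r : Fin (k+1)) j => if hr : (r : ℕ) < k then Q ⟨r, hr⟩ j else w j)
      = P * Q + Matrix.vecMulVec u w := by
  ext a b
  simp only [Matrix.mul_apply, Matrix.of_apply, Matrix.add_apply, Matrix.vecMulVec_apply]
  rw [Fin.sum_univ_castSucc]
  simp

private lemma triple_apply {n m k : ℕ} (Uu : Matrix (Fin n) (Fin k) ℝ) (Yy : Matrix (Fin m) (Fin k) ℝ) (d : Fin k → ℝ)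
    (a : Fin n) (b : Fin m) :
    (Uu * Matrix.diagonal d * Yyᵀ) a b = ∑ i, d i * (Uu a i * Yy b i) := by
  simp only [Matrix.mul_apply, Matrix.diagonal_apply, Matrix.transpose_apply, mul_ite,
    mul_zero, Finset.sum_ite_eq, Finset.sum_ite_eq', Finset.mem_univ, if_true]
  exact Finset.sum_congr rfl fun i _ => by ring

private lemma diag_sum {n m k : ℕ} (Uu : Matrix (Fin n) (Fin k) ℝ) (Yy : Matrix (Fin m) (Fin k) ℝ) (d : Fin k → ℝ) :
    Uu * Matrix.diagonal d * Yyᵀ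
      = ∑ i, d i • Matrix.vecMulVec (fun a => Uu a i) (fun a => Yy a i) := by
  ext a b
  rw [triple_apply]
  simp [Matrix.sum_apply, Matrix.vecMulVec_apply]

private lemma block_eq {n m k : ℕ} (X : Matrix (Fin n) (Fin k) ℝ) (Y' : Matrix (Fin m) (Fin k) ℝ) (f : Fin k → ℝ)
    (z0 : Fin k) (a : ℝ) :
    a • Matrix.vecMulVec (fun r => X r z0) (fun r => Y' r z0)
      + ∑ i ∈ Finset.univ.erase z0, f i • Matrix.vecMulVec (fun r => X r i) (fun r => Y' r i)
      = X * Matrix.diagonal (fun i => if i = z0 then a else f i) * Y'ᵀ := by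
  rw [diag_sum, ← Finset.add_sum_erase _ _ (Finset.mem_univ z0), if_pos rfl]
  congr 1
  exact Finset.sum_congr rfl fun i hi => by rw [if_neg (Finset.mem_erase.mp hi).1]

private lemma frob {a b : Type*} [Fintype a] [Fintype b] (W : Matrix a b ℝ) :
    Matrix.trace (Wᵀ * W) = ∑ j, ∑ i, W i j * W i j := by
  simp [Matrix.trace, Matrix.diag, Matrix.mul_apply]

private theorem aux {n k : ℕ} (hk : 0 < k)
    (A0 U : Matrix (Fin n) (Fin k) ℝ) (Y : Matrix (Fin k) (Fin k) ℝ) (c s : Fin k → ℝ)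
    (hA0 : A0ᵀ * A0 = 1) (hU : Uᵀ * U = 1) (hAU : A0ᵀ * U = 0) (hY : Yᵀ * Y = 1)
    (hcs : ∀ i, c i * c i + s i * s i = 1)
    (At : Matrix (Fin n) (Fin k) ℝ)
    (hAt : At = A0 * Y * Matrix.diagonal c * Yᵀ + U * Matrix.diagonal s * Yᵀ)
    (Bt : Matrix (Fin n) (Fin (k + 1)) ℝ)
    (hBt : Bt = Matrix.of fun r (c' : Fin (k + 1)) =>
      if hc : (c' : ℕ) < k then
        (A0 * (Matrix.vecMulVec (fun a => Y a ⟨0, hk⟩) (fun a => Y a ⟨0, hk⟩)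
            + ∑ i ∈ Finset.univ.erase (⟨0, hk⟩ : Fin k),
                c i • Matrix.vecMulVec (fun a => Y a i) (fun a => Y a i))
          + ∑ i ∈ Finset.univ.erase (⟨0, hk⟩ : Fin k),
              s i • Matrix.vecMulVec (fun a => U a i) (fun a => Y a i))
          r ⟨(c' : ℕ), hc⟩
      else U r ⟨0, hk⟩) :
    Matrix.trace ((Atᵀ * Bt)ᵀ * (Atᵀ * Bt)) = (k : ℝ) ∧
      LinearMap.range At.mulVecLin ≤ LinearMap.range Bt.mulVecLin := by
  have hUA : Uᵀ * A0 = 0 := by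
    have := congrArg Matrix.transpose hAU
    simpa using this
  have hY'' : ∀ {m : ℕ} (X : Matrix (Fin k) (Fin m) ℝ), Yᵀ * (Y * X) = X := fun X => by
    rw [← Matrix.mul_assoc, hY, Matrix.one_mul]
  have hA0' : ∀ {m : ℕ} (X : Matrix (Fin k) (Fin m) ℝ), A0ᵀ * (A0 * X) = X := fun X => by
    rw [← Matrix.mul_assoc, hA0, Matrix.one_mul]
  have hU' : ∀ {m : ℕ} (X : Matrix (Fin k) (Fin m) ℝ), Uᵀ * (U * X) = X := fun X => by
    rw [← Matrix.mul_assoc, hU, Matrix.one_mul]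
  have hAU' : ∀ {m : ℕ} (X : Matrix (Fin k) (Fin m) ℝ), A0ᵀ * (U * X) = 0 := fun X => by
    rw [← Matrix.mul_assoc, hAU, Matrix.zero_mul]
  have hUA' : ∀ {m : ℕ} (X : Matrix (Fin k) (Fin m) ℝ), Uᵀ * (A0 * X) = 0 := fun X => by
    rw [← Matrix.mul_assoc, hUA, Matrix.zero_mul]
  set z0 : Fin k := (⟨0, hk⟩ : Fin k) with hz0
  set c₀ : Fin k → ℝ := fun i => if i = z0 then 1 else c i with hc₀
  set s₀ : Fin k → ℝ := fun i => if i = z0 then 0 else s i with hs₀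
  set d : Fin k → ℝ := fun i => if i = z0 then c z0 else 1 with hd
  -- the first k columns of Bt as a matrix product
  have hblock : A0 * (Matrix.vecMulVec (fun a => Y a z0) (fun a => Y a z0)
          + ∑ i ∈ Finset.univ.erase z0,
              c i • Matrix.vecMulVec (fun a => Y a i) (fun a => Y a i))
        + ∑ i ∈ Finset.univ.erase z0,
            s i • Matrix.vecMulVec (fun a => U a i) (fun a => Y a i)
      = A0 * (Y * Matrix.diagonal c₀ * Yᵀ) + U * Matrix.diagonal s₀ * Yᵀ := by
    rw [← block_eq Y Y c z0 1, ← block_eq U Y s z0 0, one_smul, zero_smul, zero_add]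
  have hB : Bt = Matrix.of fun r (c' : Fin (k + 1)) =>
      if hc : (c' : ℕ) < k then
        (A0 * (Y * Matrix.diagonal c₀ * Yᵀ) + U * Matrix.diagonal s₀ * Yᵀ) r ⟨(c' : ℕ), hc⟩
      else U r z0 := by
    rw [hBt]
    simp only [hblock]
  -- Atᵀ * U
  have hABU : Atᵀ * U = Y * Matrix.diagonal s := by
    rw [hAt]
    simp only [Matrix.transpose_add, Matrix.transpose_mul, Matrix.transpose_transpose,
      Matrix.diagonal_transpose, Matrix.add_mul, Matrix.mul_assoc, hAU, hU,
      Matrix.mul_zero, Matrix.mul_one, zero_add, add_zero]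
  -- Atᵀ * (first block of Bt)
  have hABP : Atᵀ * (A0 * (Y * Matrix.diagonal c₀ * Yᵀ) + U * Matrix.diagonal s₀ * Yᵀ)
      = Y * Matrix.diagonal d * Yᵀ := by
    rw [hAt]
    simp only [Matrix.transpose_add, Matrix.transpose_mul, Matrix.transpose_transpose,
      Matrix.diagonal_transpose, Matrix.add_mul, Matrix.mul_add, Matrix.mul_assoc,
      hA0', hAU', hUA', hU', hY'', Matrix.mul_zero, Matrix.zero_mul, add_zero, zero_add]
    rw [← Matrix.mul_assoc (Matrix.diagonal c), ← Matrix.mul_assoc (Matrix.diagonal s),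
      Matrix.diagonal_mul_diagonal, Matrix.diagonal_mul_diagonal]
    have he : Matrix.diagonal d = Matrix.diagonal (fun i => c i * c₀ i)
        + Matrix.diagonal (fun i => s i * s₀ i) := by
      have hfun : d = (fun i => c i * c₀ i) + fun i => s i * s₀ i := by
        funext i
        by_cases h : i = z0
        · simp [hc₀, hs₀, hd, h]
        · simp only [hc₀, hs₀, hd, if_neg h, Pi.add_apply]
          exact (hcs i).symm
      rw [hfun, Matrix.diagonal_add]
      rfl
    rw [he, Matrix.add_mul, Matrix.mul_add]
  -- product with Bt in block form
  have hAB : Atᵀ * Bt = Matrix.of fun i (c' : Fin (k + 1)) =>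
      if hc : (c' : ℕ) < k then (Y * Matrix.diagonal d * Yᵀ) i ⟨(c' : ℕ), hc⟩
      else Y i z0 * s z0 := by
    rw [hB, mul_blockcol Atᵀ (A0 * (Y * Matrix.diagonal c₀ * Yᵀ) + U * Matrix.diagonal s₀ * Yᵀ)
      (fun r => U r z0)]
    have hvec : Atᵀ *ᵥ (fun r => U r z0) = fun i => Y i z0 * s z0 := by
      funext i
      show ∑ j, Atᵀ i j * U j z0 = _
      rw [← Matrix.mul_apply, hABU, Matrix.mul_diagonal]
    simp only [hABP, hvec]
  have hWW : (Y * Matrix.diagonal d * Yᵀ)ᵀ * (Y * Matrix.diagonal d * Yᵀ)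
      = Y * Matrix.diagonal (fun i => d i * d i) * Yᵀ := by
    simp only [Matrix.transpose_mul, Matrix.transpose_transpose, Matrix.diagonal_transpose,
      Matrix.mul_assoc, hY'']
    rw [← Matrix.mul_assoc (Matrix.diagonal d) (Matrix.diagonal d), Matrix.diagonal_mul_diagonal]
  have htr : Matrix.trace (Y * Matrix.diagonal (fun i => d i * d i) * Yᵀ) = ∑ i, d i * d i := by
    rw [Matrix.trace_mul_comm, ← Matrix.mul_assoc, hY, Matrix.one_mul, Matrix.trace_diagonal]
  have hYcol : ∑ i, Y i z0 * Y i z0 = 1 := by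
    have h := congrFun (congrFun hY z0) z0
    simpa [Matrix.mul_apply, Matrix.one_apply] using h
  constructor
  · rw [hAB, frob]
    simp only [Matrix.of_apply]
    rw [Fin.sum_univ_castSucc]
    simp only [Fin.coe_castSucc, Fin.is_lt, dif_pos, Fin.eta, Fin.val_last, lt_irrefl,
      dif_neg, not_false_iff]
    have e1 : ∑ j : Fin k, ∑ i : Fin k,
        (Y * Matrix.diagonal d * Yᵀ) i j * (Y * Matrix.diagonal d * Yᵀ) i j
        = c z0 * c z0 + ((k : ℝ) - 1) := by
      calc ∑ j : Fin k, ∑ i : Fin k,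
            (Y * Matrix.diagonal d * Yᵀ) i j * (Y * Matrix.diagonal d * Yᵀ) i j
          = Matrix.trace ((Y * Matrix.diagonal d * Yᵀ)ᵀ * (Y * Matrix.diagonal d * Yᵀ)) :=
            (frob _).symm
        _ = ∑ i, d i * d i := by rw [hWW, htr]
        _ = c z0 * c z0 + ((k : ℝ) - 1) := by
            rw [← Finset.add_sum_erase _ _ (Finset.mem_univ z0)]
            have hone : ∀ i ∈ Finset.univ.erase z0, d i * d i = 1 := fun i hi => by
              simp [hd, (Finset.mem_erase.mp hi).1]
            rw [Finset.sum_congr rfl hone, Finset.sum_const,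
              Finset.card_erase_of_mem (Finset.mem_univ z0), Finset.card_univ, Fintype.card_fin,
              nsmul_eq_mul, mul_one, Nat.cast_sub hk]
            simp [hd]
    have e2 : ∑ i : Fin k, (Y i z0 * s z0) * (Y i z0 * s z0) = s z0 * s z0 := by
      have : ∀ i : Fin k, (Y i z0 * s z0) * (Y i z0 * s z0)
          = (s z0 * s z0) * (Y i z0 * Y i z0) := fun i => by ring
      rw [Finset.sum_congr rfl fun i _ => this i, ← Finset.mul_sum, hYcol, mul_one]
    rw [e1, e2]
    have := hcs z0
    linarith
  · have hfact : At = Bt * Matrix.of (fun (r : Fin (k + 1)) (j : Fin k) =>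
        if hr : (r : ℕ) < k then (Y * Matrix.diagonal d * Yᵀ) ⟨(r : ℕ), hr⟩ j
        else s z0 * Y j z0) := by
      rw [hB, blockcol_mul (A0 * (Y * Matrix.diagonal c₀ * Yᵀ) + U * Matrix.diagonal s₀ * Yᵀ)
        (fun r => U r z0) (Y * Matrix.diagonal d * Yᵀ) (fun j => s z0 * Y j z0)]
      have hPW : (A0 * (Y * Matrix.diagonal c₀ * Yᵀ) + U * Matrix.diagonal s₀ * Yᵀ)
            * (Y * Matrix.diagonal d * Yᵀ)
          = A0 * Y * Matrix.diagonal c * Yᵀ + U * Matrix.diagonal s₀ * Yᵀ := by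
        simp only [Matrix.add_mul, Matrix.mul_assoc, hY'']
        rw [← Matrix.mul_assoc (Matrix.diagonal c₀), ← Matrix.mul_assoc (Matrix.diagonal s₀),
          Matrix.diagonal_mul_diagonal, Matrix.diagonal_mul_diagonal]
        have h1 : (fun i => c₀ i * d i) = c := funext fun i => by
          by_cases h : i = z0 <;> simp [hc₀, hd, h]
        have h2 : (fun i => s₀ i * d i) = s₀ := funext fun i => by
          by_cases h : i = z0 <;> simp [hs₀, hd, h]
        rw [h1, h2]
      have hsplit : U * Matrix.diagonal s * Yᵀ = U * Matrix.diagonal s₀ * Yᵀ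
          + Matrix.vecMulVec (fun r => U r z0) (fun j => s z0 * Y j z0) := by
        ext a b
        simp only [Matrix.add_apply, Matrix.vecMulVec_apply, triple_apply]
        rw [← Finset.add_sum_erase _ (fun i => s i * (U a i * Y b i)) (Finset.mem_univ z0),
          ← Finset.add_sum_erase _ (fun i => s₀ i * (U a i * Y b i)) (Finset.mem_univ z0)]
        have heq : ∀ i ∈ Finset.univ.erase z0,
            s₀ i * (U a i * Y b i) = s i * (U a i * Y b i) := fun i hi => by
          simp [hs₀, (Finset.mem_erase.mp hi).1]
        rw [Finset.sum_congr rfl heq]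
        simp only [hs₀, if_pos rfl]
        ring
      rw [hPW, hAt, hsplit, add_assoc]
    rw [hfact, Matrix.mulVecLin_mul]
    exact LinearMap.range_comp_le_range _ _


/-- In the geodesic embedding construction, for every `t` one has `‖A(t)ᵀB(t)‖_F² = k`;
equivalently all principal angles between the column spaces of `A(t)` and `B(t)` vanish,
i.e. the column space of `A(t)` is contained in the column space of `B(t)`. -/
theorem embedded_geodesic_contains_geodesic {n k : ℕ} (hk : 0 < k)
    (A0 U : Matrix (Fin n) (Fin k) ℝ) (Y : Matrix (Fin k) (Fin k) ℝ) (σ : Fin k → ℝ)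
    (hA0 : A0ᵀ * A0 = 1) (hU : Uᵀ * U = 1) (hAU : A0ᵀ * U = 0) (hY : Yᵀ * Y = 1)
    (hσ : ∀ i, 0 ≤ σ i)
    (A : ℝ → Matrix (Fin n) (Fin k) ℝ)
    (hAdef : ∀ t, A t = A0 * Y * Matrix.diagonal (fun i => Real.cos (σ i * t)) * Yᵀ
        + U * Matrix.diagonal (fun i => Real.sin (σ i * t)) * Yᵀ)
    (B : ℝ → Matrix (Fin n) (Fin (k + 1)) ℝ)
    (hBdef : ∀ t, B t = Matrix.of fun r (c : Fin (k + 1)) =>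
      if hc : (c : ℕ) < k then
        (A0 * (Matrix.vecMulVec (fun a => Y a ⟨0, hk⟩) (fun a => Y a ⟨0, hk⟩)
            + ∑ i ∈ Finset.univ.erase (⟨0, hk⟩ : Fin k),
                Real.cos (σ i * t) • Matrix.vecMulVec (fun a => Y a i) (fun a => Y a i))
          + ∑ i ∈ Finset.univ.erase (⟨0, hk⟩ : Fin k),
              Real.sin (σ i * t) • Matrix.vecMulVec (fun a => U a i) (fun a => Y a i))
          r ⟨(c : ℕ), hc⟩
      else U r ⟨0, hk⟩) :
    ∀ t, Matrix.trace (((A t)ᵀ * B t)ᵀ * ((A t)ᵀ * B t)) = (k : ℝ) ∧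
      LinearMap.range (A t).mulVecLin ≤ LinearMap.range (B t).mulVecLin := by
  intro t
  exact aux hk A0 U Y (fun i => Real.cos (σ i * t)) (fun i => Real.sin (σ i * t))
    hA0 hU hAU hY
    (fun i => by have := Real.sin_sq_add_cos_sq (σ i * t); nlinarith)
    (A t) (hAdef t) (B t) (hBdef t)
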